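/- arXiv:1701.04385 — 5 statements merged into one kernel-verified Lean document; each statement's English description precedes it below -/
import Mathlib

section
/- Let (V, E, ends) be a nonempty finite connected multigraph with vertex weights h : V → ℕ, of genus g = #E − #V + 1 + Σ_v h(v), and suppose g ≥ 2 and the graph is stable, i.e. 2h(v) − 2 + deg(v) > 0 for every vertex v. Then #V ≤ 2g − 2 and #E ≤ 3g − 3. -/
/-- The degree of a vertex `v` in a multigraph given by an endpoint map
`ends : E → Sym2 V`: each edge incident to `v` counts once, and a loop at `v`
counts twice. -/
def multigraphDeg {V E : Type*} [Fintype E] [DecidableEq V]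
    (ends : E → Sym2 V) (v : V) : ℕ :=
  ∑ e : E, (if v ∈ ends e then (if (ends e).IsDiag then 2 else 1) else 0)

/-- A multigraph is connected if any two vertices are related by the
reflexive-transitive closure of the edge relation. -/
def MultigraphConnected {V E : Type*} (ends : E → Sym2 V) : Prop :=
  ∀ u v : V, Relation.ReflTransGen (fun a b => ∃ e : E, ends e = s(a, b)) u v

lemma sym2_weight_sum {V : Type*} [Fintype V] [DecidableEq V] (s : Sym2 V) :
    ∑ v : V, (if v ∈ s then (if s.IsDiag then 2 else 1) else 0) = 2 := by
  induction s using Sym2.inductionOn with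
  | hf a b =>
    by_cases hab : a = b
    · subst hab
      simp [Sym2.mem_iff]
    · have key : ∀ v : V, (if v ∈ s(a, b) then (if (s(a, b)).IsDiag then 2 else 1) else 0)
          = (if v = a then 1 else 0) + (if v = b then 1 else 0) := by
        intro v
        by_cases hva : v = a <;> by_cases hvb : v = b <;>
          simp_all [Sym2.mem_iff, Sym2.isDiag_iff_proj_eq]
      rw [Finset.sum_congr rfl fun v _ => key v, Finset.sum_add_distrib]
      simp

lemma handshake {V E : Type*} [Fintype V] [Fintype E] [DecidableEq V]
    (ends : E → Sym2 V) :
    ∑ v : V, multigraphDeg ends v = 2 * Fintype.card E := by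
  unfold multigraphDeg
  rw [Finset.sum_comm]
  rw [Finset.sum_congr rfl fun e _ => sym2_weight_sum (ends e)]
  rw [Finset.sum_const, Finset.card_univ, smul_eq_mul, mul_comm]

/-- A nonempty connected stable vertex-weighted multigraph of genus `g ≥ 2` has at most
`2g − 2` vertices and at most `3g − 3` edges. -/
theorem stable_graph_vertex_edge_bounds {V E : Type*} [Fintype V] [Fintype E]
    [DecidableEq V] [Nonempty V]
    (ends : E → Sym2 V) (h : V → ℕ) (g : ℤ)
    (hconn : MultigraphConnected ends)
    (hg : g = (Fintype.card E : ℤ) - (Fintype.card V : ℤ) + 1 + ∑ v : V, (h v : ℤ))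
    (hg2 : 2 ≤ g)
    (hstable : ∀ v : V, 0 < 2 * (h v : ℤ) - 2 + (multigraphDeg ends v : ℤ)) :
    (Fintype.card V : ℤ) ≤ 2 * g - 2 ∧ (Fintype.card E : ℤ) ≤ 3 * g - 3 := by
  have hsum : (Fintype.card V : ℤ) ≤
      ∑ v : V, (2 * (h v : ℤ) - 2 + (multigraphDeg ends v : ℤ)) := by
    calc (Fintype.card V : ℤ) = ∑ _v : V, (1 : ℤ) := by simp
    _ ≤ _ := Finset.sum_le_sum fun v _ => (hstable v)
  have hdeg : ∑ v : V, (multigraphDeg ends v : ℤ) = 2 * (Fintype.card E : ℤ) := by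
    have := handshake ends
    exact_mod_cast congrArg (Nat.cast : ℕ → ℤ) this
  have hS : ∑ v : V, (2 * (h v : ℤ) - 2 + (multigraphDeg ends v : ℤ)) = 2 * g - 2 := by
    rw [Finset.sum_add_distrib, Finset.sum_sub_distrib, ← Finset.mul_sum, hdeg]
    simp only [Finset.sum_const, Finset.card_univ, nsmul_eq_mul, mul_one]
    rw [hg]; ring
  have hV : (Fintype.card V : ℤ) ≤ 2 * g - 2 := hS ▸ hsum
  have hh : 0 ≤ ∑ v : V, (h v : ℤ) :=
    Finset.sum_nonneg fun v _ => Int.natCast_nonneg _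
  refine ⟨hV, ?_⟩
  have : (Fintype.card E : ℤ) = g - 1 + (Fintype.card V : ℤ) - ∑ v : V, (h v : ℤ) := by
    rw [hg]; ring
  linarith
end

section
/- Let (V, E, ends) be a nonempty finite connected multigraph with vertex weights h : V → ℕ, of genus g = #E − #V + 1 + Σ_v h(v), with g ≥ 2, and assume stability: 2h(v) − 2 + deg(v) > 0 for every vertex v. Then #E = 3g − 3 if and only if h(v) = 0 and deg(v) = 3 for every vertex v; and in that case also #V = 2g − 2. -/
lemma sym2_sum_two {V : Type*} [Fintype V] [DecidableEq V] (z : Sym2 V) :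
    ∑ v : V, (if v ∈ z then (if z.IsDiag then 2 else 1) else 0) = 2 := by
  induction z using Sym2.ind with
  | _ a b =>
    by_cases hab : a = b
    · subst hab
      simp [Sym2.mem_iff, Finset.sum_ite_eq']
    · have hd : ¬ (s(a,b)).IsDiag := by simpa [Sym2.mk_isDiag_iff] using hab
      have key : ∀ v : V, (if v ∈ s(a,b) then (if (s(a,b)).IsDiag then 2 else 1) else 0)
          = (if v = a then 1 else 0) + (if v = b then 1 else 0) := by
        intro v
        rw [if_neg hd]
        by_cases h1 : v = a <;> by_cases h2 : v = b <;> simp_all [Sym2.mem_iff]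
      rw [Finset.sum_congr rfl (fun v _ => key v), Finset.sum_add_distrib]
      simp [Finset.sum_ite_eq']

/-- For a nonempty connected stable vertex-weighted multigraph of genus `g ≥ 2`, the
number of edges equals `3g − 3` if and only if every vertex has weight `0` and degree
`3`; and in that case the number of vertices is `2g − 2`. -/
theorem max_edges_iff_trivalent {V E : Type*} [Fintype V] [Fintype E]
    [DecidableEq V] [Nonempty V]
    (ends : E → Sym2 V) (h : V → ℕ) (g : ℤ)
    (hconn : MultigraphConnected ends)
    (hg : g = (Fintype.card E : ℤ) - (Fintype.card V : ℤ) + 1 + ∑ v : V, (h v : ℤ))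
    (hg2 : 2 ≤ g)
    (hstable : ∀ v : V, 0 < 2 * (h v : ℤ) - 2 + (multigraphDeg ends v : ℤ)) :
    ((Fintype.card E : ℤ) = 3 * g - 3 ↔ ∀ v : V, h v = 0 ∧ multigraphDeg ends v = 3) ∧
    ((Fintype.card E : ℤ) = 3 * g - 3 → (Fintype.card V : ℤ) = 2 * g - 2) := by
  have hhand : ∑ v : V, (multigraphDeg ends v : ℤ) = 2 * (Fintype.card E : ℤ) := by
    have := handshake ends
    exact_mod_cast congrArg (Nat.cast : ℕ → ℤ) this
  -- Forward direction
  have fwd : (Fintype.card E : ℤ) = 3 * g - 3 →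
      ∀ v : V, h v = 0 ∧ multigraphDeg ends v = 3 := by
    intro hE v
    have hsum0 : ∑ v : V, (3 * (h v : ℤ) + (multigraphDeg ends v : ℤ) - 3) = 0 := by
      rw [Finset.sum_sub_distrib, Finset.sum_add_distrib, ← Finset.mul_sum, hhand]
      rw [Finset.sum_const, Finset.card_univ, nsmul_eq_mul]
      linarith [hg, hE]
    have hnn : ∀ w ∈ Finset.univ, (0:ℤ) ≤ 3 * (h w : ℤ) + (multigraphDeg ends w : ℤ) - 3 := by
      intro w _
      have := hstable w
      have : (0:ℤ) ≤ (h w : ℤ) := Int.natCast_nonneg _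
      linarith [hstable w]
    have hz := (Finset.sum_eq_zero_iff_of_nonneg hnn).mp hsum0 v (Finset.mem_univ v)
    have hs := hstable v
    constructor
    · have : (h v : ℤ) = 0 := by linarith
      exact_mod_cast this
    · have : (multigraphDeg ends v : ℤ) = 3 := by
        have hv0 : (h v : ℤ) = 0 := by linarith
        linarith
      exact_mod_cast this
  constructor
  · constructor
    · exact fwd
    · intro hall
      have hh : ∑ v : V, (h v : ℤ) = 0 :=
        Finset.sum_eq_zero (fun v _ => by exact_mod_cast (hall v).1)
      have hd : ∑ v : V, (multigraphDeg ends v : ℤ) = 3 * (Fintype.card V : ℤ) := by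
        have h3 : ∀ v : V, (multigraphDeg ends v : ℤ) = 3 :=
          fun v => by exact_mod_cast (hall v).2
        rw [Finset.sum_congr rfl (fun v _ => h3 v), Finset.sum_const, Finset.card_univ,
          nsmul_eq_mul, mul_comm]
      rw [hhand] at hd
      rw [hg, hh]
      linarith
  · intro hE
    have hall := fwd hE
    have hd : ∑ v : V, (multigraphDeg ends v : ℤ) = 3 * (Fintype.card V : ℤ) := by
      have h3 : ∀ v : V, (multigraphDeg ends v : ℤ) = 3 :=
        fun v => by exact_mod_cast (hall v).2
      rw [Finset.sum_congr rfl (fun v _ => h3 v), Finset.sum_const, Finset.card_univ,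
        nsmul_eq_mul, mul_comm]
    rw [hhand, hE] at hd
    linarith
end

section
/- For every integer g ≥ 2 there exists a connected multigraph (V, E, ends) with exactly 2g − 2 vertices and 3g − 3 edges in which every vertex has degree exactly 3; equipped with the zero vertex weight function it is a stable graph of genus g. -/
set_option maxHeartbeats 1000000


/-- Cycle on `2g-2` vertices together with a perfect matching. -/
def chainEnds (g : ℕ) (hg : 2 ≤ g) (e : Fin (3 * g - 3)) : Sym2 (Fin (2 * g - 2)) :=
  if h : e.val < 2 * g - 2 then
    s(⟨e.val, h⟩, ⟨(e.val + 1) % (2 * g - 2), Nat.mod_lt _ (by omega)⟩)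
  else
    s(⟨2 * (e.val - (2 * g - 2)), by have := e.isLt; omega⟩,
      ⟨2 * (e.val - (2 * g - 2)) + 1, by have := e.isLt; omega⟩)

lemma succMod {n k : ℕ} (h : k < n) :
    (k + 1) % n = if k + 1 = n then 0 else k + 1 := by
  split
  · simp [*, Nat.mod_self]
  · exact Nat.mod_eq_of_lt (by omega)

lemma chainEnds_not_isDiag (g : ℕ) (hg : 2 ≤ g) (e : Fin (3 * g - 3)) :
    ¬ (chainEnds g hg e).IsDiag := by
  unfold chainEnds
  split
  · rename_i h
    rw [Sym2.mk_isDiag_iff]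
    intro hc
    have hc' : e.val = (e.val + 1) % (2 * g - 2) := congrArg Fin.val hc
    rw [succMod h] at hc'
    split at hc' <;> omega
  · rw [Sym2.mk_isDiag_iff]
    intro hc
    have := congrArg Fin.val hc
    simp at this

lemma chainDeg (g : ℕ) (hg : 2 ≤ g) (v : Fin (2 * g - 2)) :
    multigraphDeg (chainEnds g hg) v = 3 := by
  have hv := v.isLt
  unfold multigraphDeg
  have h1 : ∀ e : Fin (3 * g - 3),
      (if v ∈ chainEnds g hg e then (if (chainEnds g hg e).IsDiag then 2 else 1) else 0)
      = if v ∈ chainEnds g hg e then 1 else 0 := by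
    intro e
    rw [if_neg (chainEnds_not_isDiag g hg e)]
  rw [Finset.sum_congr rfl (fun e _ => h1 e), ← Finset.card_filter]
  set E1 : Fin (3 * g - 3) := ⟨v.val, by omega⟩ with hE1def
  set E2 : Fin (3 * g - 3) :=
    ⟨if v.val = 0 then 2 * g - 2 - 1 else v.val - 1, by split <;> omega⟩ with hE2def
  set E3 : Fin (3 * g - 3) := ⟨2 * g - 2 + v.val / 2, by omega⟩ with hE3def
  have hv1 : E1.val = v.val := rfl
  have hv2 : E2.val = if v.val = 0 then 2 * g - 2 - 1 else v.val - 1 := rfl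
  have hv3 : E3.val = 2 * g - 2 + v.val / 2 := rfl
  have hfilter : Finset.univ.filter (fun e => v ∈ chainEnds g hg e) = {E1, E2, E3} := by
    ext e
    simp only [Finset.mem_filter, Finset.mem_univ, true_and, Finset.mem_insert,
      Finset.mem_singleton]
    constructor
    · intro hmem
      unfold chainEnds at hmem
      split at hmem
      · rename_i h
        rw [Sym2.mem_iff] at hmem
        rcases hmem with h1' | h2'
        · left
          apply Fin.ext
          rw [hv1]
          exact (congrArg Fin.val h1').symm
        · right; left
          have hval : v.val = (e.val + 1) % (2 * g - 2) := congrArg Fin.val h2'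
          rw [succMod h] at hval
          apply Fin.ext
          rw [hv2]
          split <;> split at hval <;> omega
      · rename_i h
        rw [Sym2.mem_iff] at hmem
        have hlt := e.isLt
        rcases hmem with h1' | h2'
        · right; right
          have hval : v.val = 2 * (e.val - (2 * g - 2)) := congrArg Fin.val h1'
          apply Fin.ext
          rw [hv3]
          omega
        · right; right
          have hval : v.val = 2 * (e.val - (2 * g - 2)) + 1 := congrArg Fin.val h2'
          apply Fin.ext
          rw [hv3]
          omega
    · intro hmem
      rcases hmem with rfl | rfl | rfl
      · unfold chainEnds
        rw [dif_pos (show E1.val < 2 * g - 2 from hv)]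
        rw [Sym2.mem_iff]
        left
        exact Fin.ext hv1.symm
      · have hlt : E2.val < 2 * g - 2 := by rw [hv2]; split <;> omega
        unfold chainEnds
        rw [dif_pos hlt, Sym2.mem_iff]
        right
        apply Fin.ext
        show v.val = (E2.val + 1) % (2 * g - 2)
        rw [succMod hlt, hv2]
        by_cases h0 : v.val = 0
        · rw [if_pos h0]
          split <;> omega
        · rw [if_neg h0]
          split <;> omega
      · have hge : ¬ (E3.val < 2 * g - 2) := by rw [hv3]; omega
        unfold chainEnds
        rw [dif_neg hge, Sym2.mem_iff]
        have hsub : E3.val - (2 * g - 2) = v.val / 2 := by rw [hv3]; omega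
        have hpar : v.val = 2 * (v.val / 2) ∨ v.val = 2 * (v.val / 2) + 1 := by omega
        rcases hpar with h | h
        · left
          apply Fin.ext
          show v.val = 2 * (E3.val - (2 * g - 2))
          rw [hsub]; exact h
        · right
          apply Fin.ext
          show v.val = 2 * (E3.val - (2 * g - 2)) + 1
          rw [hsub]; exact h
  rw [hfilter]
  have h12 : E1 ≠ E2 := by
    intro hc
    have h' := congrArg Fin.val hc
    rw [hv1, hv2] at h'
    split at h' <;> omega
  have h13 : E1 ≠ E3 := by
    intro hc
    have h' := congrArg Fin.val hc
    rw [hv1, hv3] at h'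
    omega
  have h23 : E2 ≠ E3 := by
    intro hc
    have h' := congrArg Fin.val hc
    rw [hv2, hv3] at h'
    split at h' <;> omega
  rw [Finset.card_insert_of_notMem (by simp [h12, h13]),
    Finset.card_insert_of_notMem (by simp [h23]), Finset.card_singleton]

/-- For every `g ≥ 2` there is a connected multigraph with `2g − 2` vertices and
`3g − 3` edges all of whose vertices are trivalent; with the zero vertex weight
function it is a stable graph of genus `g`. -/
theorem exists_trivalent_stable_graph (g : ℕ) (hg : 2 ≤ g) :
    ∃ ends : Fin (3 * g - 3) → Sym2 (Fin (2 * g - 2)),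
      MultigraphConnected ends ∧
      (∀ v : Fin (2 * g - 2), multigraphDeg ends v = 3) ∧
      (∀ v : Fin (2 * g - 2), 0 < 2 * ((0 : ℕ) : ℤ) - 2 + (multigraphDeg ends v : ℤ)) ∧
      (Fintype.card (Fin (3 * g - 3)) : ℤ) - (Fintype.card (Fin (2 * g - 2)) : ℤ) + 1
          + ∑ _v : Fin (2 * g - 2), ((0 : ℕ) : ℤ) = g := by
  refine ⟨chainEnds g hg, ?_, fun v => chainDeg g hg v, ?_, ?_⟩
  · -- connectivity
    set R := fun a b : Fin (2 * g - 2) => ∃ e : Fin (3 * g - 3), chainEnds g hg e = s(a, b)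
      with hR
    have hsymm : Symmetric R := by
      rintro a b ⟨e, he⟩
      exact ⟨e, by rw [he, Sym2.eq_swap]⟩
    have reach0 : ∀ k (hk : k < 2 * g - 2),
        Relation.ReflTransGen R ⟨0, by omega⟩ ⟨k, hk⟩ := by
      intro k
      induction k with
      | zero => intro hk; exact Relation.ReflTransGen.refl
      | succ k ih =>
        intro hk
        refine Relation.ReflTransGen.tail (ih (by omega)) ?_
        refine ⟨⟨k, by omega⟩, ?_⟩
        unfold chainEnds
        rw [dif_pos (show k < 2 * g - 2 by omega)]
        rw [Sym2.eq_iff]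
        left
        exact ⟨Fin.ext rfl, Fin.ext (Nat.mod_eq_of_lt hk)⟩
    intro u v
    have hu := reach0 u.val u.isLt
    have hv := reach0 v.val v.isLt
    have hu' : Relation.ReflTransGen R u ⟨0, by omega⟩ :=
      (@Relation.ReflTransGen.symmetric _ R ⟨fun _ _ h => hsymm h⟩).symm _ _ (by simpa using hu)
    exact hu'.trans (by simpa using hv)
  · -- stability
    intro v
    rw [chainDeg g hg v]
    norm_num
  · -- genus
    simp only [Fintype.card_fin, Finset.sum_const, Nat.cast_zero, smul_zero, add_zero]
    omega
end

section
/- There are exactly 51 functions c : {1,2,3,4} → {1,2,3,4} with c(v) ≠ v for all v for which there exists M : Edges(K4) → ℝ with M(e) > 0 for all edges e such that, for every vertex v and every u with u ≠ v and u ≠ c(v), one has M({v, c(v)}) < M({v, u}). -/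
set_option maxRecDepth 10000
set_option maxHeartbeats 1000000


/-- The edges of the complete graph `K4` on the vertex set `Fin 4`: the six
2-element subsets of the vertices. -/
def K4Edge : Type := {e : Finset (Fin 4) // e.card = 2}

instance : Fintype K4Edge := Subtype.fintype _

namespace ChamberAux

def sN (c : Fin 4 → Fin 4) (v : Fin 4) : ℕ :=
  if c (c v) = v then 1 else if c (c (c v)) = c v then 2 else 3

def eN (c : Fin 4 → Fin 4) (S : Finset (Fin 4)) : ℕ :=
  if S = {0, c 0} then sN c 0 else if S = {1, c 1} then sN c 1
  else if S = {2, c 2} then sN c 2 else if S = {3, c 3} then sN c 3 else 10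

def Q (c : Fin 4 → Fin 4) : Prop :=
  ∀ v, c (c (c v)) ≠ v ∧ (c (c (c (c v))) = v → c (c v) = v)

instance : DecidablePred Q := fun c => by unfold Q; infer_instance

lemma keyA : ∀ c : Fin 4 → Fin 4, (∀ v, c v ≠ v) → Q c →
    ∀ v u : Fin 4, u ≠ v → u ≠ c v → eN c {v, c v} < eN c {v, u} := by decide

lemma posA (c : Fin 4 → Fin 4) (S : Finset (Fin 4)) : 0 < eN c S := by
  unfold eN sN; split_ifs <;> norm_num

lemma case3 : ∀ c : Fin 4 → Fin 4, (∀ v, c v ≠ v) → ∀ v, c (c (c v)) = v →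
    c (c v) ≠ v ∧ c (c v) ≠ c v ∧ c v ≠ v := by decide

lemma case4 : ∀ c : Fin 4 → Fin 4, (∀ v, c v ≠ v) → ∀ v,
    c (c (c (c v))) = v → c (c v) ≠ v →
    c v ≠ v ∧ c (c v) ≠ v ∧ c (c v) ≠ c v ∧ c (c (c v)) ≠ v ∧
      c (c (c v)) ≠ c v ∧ c (c (c v)) ≠ c (c v) := by decide

/-- an edge from an unordered pair -/
def E (x y : Fin 4) (h : x ≠ y) : K4Edge := ⟨{x, y}, Finset.card_pair h⟩

lemma E_comm (x y : Fin 4) (h : x ≠ y) : E x y h = E y x h.symm :=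
  Subtype.ext (Finset.pair_comm x y)

lemma main_iff (c : Fin 4 → Fin 4) (hc : ∀ v, c v ≠ v) :
    (∃ M : K4Edge → ℝ, (∀ e : K4Edge, 0 < M e) ∧
        ∀ v u : Fin 4, u ≠ v → u ≠ c v →
          ∀ e e' : K4Edge, e.val = {v, c v} → e'.val = {v, u} → M e < M e') ↔ Q c := by
  constructor
  · rintro ⟨M, hpos, H⟩
    by_contra hQ
    have hv : ∃ v, c (c (c v)) = v ∨ (c (c (c (c v))) = v ∧ c (c v) ≠ v) := by
      by_contra h
      push_neg at h
      exact hQ (fun v => ⟨(h v).1, (h v).2⟩)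
    obtain ⟨v, h3 | ⟨h4, h2⟩⟩ := hv
    · -- 3-cycle: v → c v → c² v → v
      obtain ⟨n2, n3, n1⟩ := case3 c hc v h3
      have m1 := H v (c (c v)) n2 n3 (E v (c v) n1.symm) (E v (c (c v)) n2.symm) rfl rfl
      have m2 := H (c (c v)) (c v) n3.symm (by rw [h3]; exact n1)
        (E (c (c v)) (c (c (c v))) (hc _).symm) (E (c (c v)) (c v) n3) rfl rfl
      have m3 := H (c v) v n1.symm n2.symm
        (E (c v) (c (c v)) n3.symm) (E (c v) v n1) rfl rfl
      have e1 : E v (c (c v)) n2.symm = E (c (c v)) (c (c (c v))) (hc _).symm :=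
        Subtype.ext (show ({v, c (c v)} : Finset (Fin 4)) = {c (c v), c (c (c v))} by
          rw [h3]; exact Finset.pair_comm _ _)
      have e2 : E (c (c v)) (c v) n3 = E (c v) (c (c v)) n3.symm :=
        Subtype.ext (Finset.pair_comm _ _)
      have e3 : E (c v) v n1 = E v (c v) n1.symm := Subtype.ext (Finset.pair_comm _ _)
      rw [e1] at m1; rw [e2] at m2; rw [e3] at m3
      exact lt_irrefl _ (lt_trans (lt_trans m1 m2) m3)
    · -- 4-cycle: v → c v → c² v → c³ v → v
      obtain ⟨n1, n2, n3, n4, n5, n6⟩ := case4 c hc v h4 h2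
      have m1 := H v (c (c (c v))) n4 n5 (E v (c v) n1.symm) (E v (c (c (c v))) n4.symm)
        rfl rfl
      have m2 := H (c (c (c v))) (c (c v)) n6.symm (by rw [h4]; exact n2)
        (E (c (c (c v))) (c (c (c (c v)))) (hc _).symm) (E (c (c (c v))) (c (c v)) n6)
        rfl rfl
      have m3 := H (c (c v)) (c v) n3.symm n5.symm
        (E (c (c v)) (c (c (c v))) n6.symm) (E (c (c v)) (c v) n3) rfl rfl
      have m4 := H (c v) v n1.symm n2.symm
        (E (c v) (c (c v)) n3.symm) (E (c v) v n1) rfl rfl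
      have e1 : E v (c (c (c v))) n4.symm
          = E (c (c (c v))) (c (c (c (c v)))) (hc _).symm :=
        Subtype.ext (show ({v, c (c (c v))} : Finset (Fin 4))
            = {c (c (c v)), c (c (c (c v)))} by rw [h4]; exact Finset.pair_comm _ _)
      have e2 : E (c (c (c v))) (c (c v)) n6 = E (c (c v)) (c (c (c v))) n6.symm :=
        Subtype.ext (Finset.pair_comm _ _)
      have e3 : E (c (c v)) (c v) n3 = E (c v) (c (c v)) n3.symm :=
        Subtype.ext (Finset.pair_comm _ _)
      have e4 : E (c v) v n1 = E v (c v) n1.symm := Subtype.ext (Finset.pair_comm _ _)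
      rw [e1] at m1; rw [e2] at m2; rw [e3] at m3; rw [e4] at m4
      exact lt_irrefl _ (lt_trans (lt_trans (lt_trans m1 m2) m3) m4)
  · intro hQ
    refine ⟨fun e => (eN c e.val : ℝ), fun e => ?_, ?_⟩
    · show (0 : ℝ) < ((eN c e.val : ℕ) : ℝ)
      exact_mod_cast posA c e.val
    · intro v u h1 h2 e e' he he'
      have : eN c e.val < eN c e'.val := by
        rw [he, he']; exact keyA c hc hQ v u h1 h2
      show ((eN c e.val : ℕ) : ℝ) < ((eN c e'.val : ℕ) : ℝ)
      exact_mod_cast this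

lemma cardQ : Fintype.card {c : Fin 4 → Fin 4 // (∀ v, c v ≠ v) ∧ Q c} = 51 := by decide

end ChamberAux

/-- There are exactly `51` functions `c` on the vertices of `K4` with `c v ≠ v` for all
`v` such that some metric `M` on `K4` makes the edge `{v, c v}` the unique minimum of
`M` among the three edges incident to `v`, for every vertex `v`: these index the `51`
open chambers of the cone of metrics on `K4`. -/
theorem fiftyone_chamber_functions :
    Nat.card {c : Fin 4 → Fin 4 // (∀ v, c v ≠ v) ∧
      ∃ M : K4Edge → ℝ, (∀ e : K4Edge, 0 < M e) ∧
        ∀ v u : Fin 4, u ≠ v → u ≠ c v →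
          ∀ e e' : K4Edge, e.val = {v, c v} → e'.val = {v, u} → M e < M e'} = 51 := by
  have key : ∀ c : Fin 4 → Fin 4,
      ((∀ v, c v ≠ v) ∧ ∃ M : K4Edge → ℝ, (∀ e : K4Edge, 0 < M e) ∧
        ∀ v u : Fin 4, u ≠ v → u ≠ c v →
          ∀ e e' : K4Edge, e.val = {v, c v} → e'.val = {v, u} → M e < M e')
      ↔ ((∀ v, c v ≠ v) ∧ ChamberAux.Q c) := fun c =>
    and_congr_right (fun hc => ChamberAux.main_iff c hc)
  rw [Nat.card_congr (Equiv.subtypeEquivRight key), Nat.card_eq_fintype_card]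
  exact ChamberAux.cardQ
end

section
/- Consider the set C of the 51 functions c : {1,2,3,4} → {1,2,3,4} with c(v) ≠ v for all v such that the system of strict inequalities M({v, c(v)}) < M({v, u}) (for all vertices v and all u ∉ {v, c(v)}) admits a solution M : Edges(K4) → ℝ with all values positive. The symmetric group S4 acts on C by σ · c = σ ∘ c ∘ σ⁻¹. This action has exactly 4 orbits, of cardinalities 3, 12, 12 and 24. -/
set_option maxRecDepth 100000
set_option maxHeartbeats 1000000

/-- The `51` functions `c` on the vertices of `K4` with `c v ≠ v` for all `v` such that
some positive metric `M` on the edges of `K4` makes the edge `{v, c v}` the unique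
minimum of `M` among the three edges incident to `v`, for every vertex `v`: they index
the open chambers of the cone of metrics on `K4`. -/
def chamberFns : Set (Fin 4 → Fin 4) :=
  {c | (∀ v, c v ≠ v) ∧
    ∃ M : K4Edge → ℝ, (∀ e : K4Edge, 0 < M e) ∧
      ∀ v u : Fin 4, u ≠ v → u ≠ c v →
        ∀ e e' : K4Edge, e.val = {v, c v} → e'.val = {v, u} → M e < M e'}

/-- The orbit of a function `c : Fin 4 → Fin 4` under the conjugation action
`σ · c = σ ∘ c ∘ σ⁻¹` of the symmetric group `S4`. -/
def conjOrbit (c : Fin 4 → Fin 4) : Set (Fin 4 → Fin 4) :=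
  {c' | ∃ σ : Equiv.Perm (Fin 4), c' = σ ∘ c ∘ σ.symm}

/-! ### Auxiliary material -/

/-- The image of an edge under a permutation of the vertices. -/
def edgeMap (σ : Equiv.Perm (Fin 4)) (e : K4Edge) : K4Edge :=
  ⟨e.val.image σ, by rw [Finset.card_image_of_injective _ σ.injective]; exact e.prop⟩

/-- Make an edge from two distinct vertices. -/
def mkE (a b : Fin 4) (h : a ≠ b) : K4Edge := ⟨{a, b}, Finset.card_pair h⟩

@[simp] lemma mkE_val (a b : Fin 4) (h : a ≠ b) : (mkE a b h).val = {a, b} := rfl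

/-- The chamber functions are stable under conjugation. -/
lemma conj_mem_chamberFns {c : Fin 4 → Fin 4} (hc : c ∈ chamberFns)
    (σ : Equiv.Perm (Fin 4)) : (σ ∘ c ∘ σ.symm) ∈ chamberFns := by
  obtain ⟨h1, M, hpos, hM⟩ := hc
  refine ⟨fun v hv => h1 (σ.symm v) ?_, fun e => M (edgeMap σ.symm e),
    fun e => hpos _, ?_⟩
  · have : σ.symm ((σ ∘ c ∘ σ.symm) v) = σ.symm v := congrArg σ.symm hv
    simpa using this
  · intro v u hu huc e e' he he'
    refine hM (σ.symm v) (σ.symm u) (fun h => hu (by simpa using congrArg σ h))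
      (fun h => huc ?_) (edgeMap σ.symm e) (edgeMap σ.symm e') ?_ ?_
    · have := congrArg σ h
      simp only [Equiv.apply_symm_apply] at this
      exact this
    · show (e.val.image σ.symm) = _
      rw [he]
      show ({v, σ (c (σ.symm v))} : Finset (Fin 4)).image σ.symm = _
      rw [Finset.image_insert, Finset.image_singleton]
      simp
    · show (e'.val.image σ.symm) = _
      rw [he']
      show ({v, u} : Finset (Fin 4)).image σ.symm = _
      rw [Finset.image_insert, Finset.image_singleton]

/-- A chamber function has no 3-cycle. -/
lemma no_three_cycle {c : Fin 4 → Fin 4} (hc : c ∈ chamberFns) (v : Fin 4)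
    (h2 : c (c v) ≠ v) : c (c (c v)) ≠ v := by
  intro h3
  obtain ⟨h1, M, _, hM⟩ := hc
  have d12 : v ≠ c v := (h1 v).symm
  have d23 : c v ≠ c (c v) := (h1 (c v)).symm
  have d13 : v ≠ c (c v) := fun h => h2 h.symm
  have i1 : M (mkE v (c v) d12) < M (mkE v (c (c v)) d13) :=
    hM v (c (c v)) h2 (h1 (c v)) _ _ rfl rfl
  have i2 : M (mkE (c v) (c (c v)) d23) < M (mkE v (c v) d12) := by
    refine hM (c v) v d12 (fun h => d13 h) _ _ rfl ?_
    rw [mkE_val, Finset.pair_comm]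
  have i3 : M (mkE v (c (c v)) d13) < M (mkE (c v) (c (c v)) d23) := by
    refine hM (c (c v)) (c v) d23 (fun h => d12 (by rw [h, h3])) _ _ ?_ ?_
    · rw [mkE_val, h3, Finset.pair_comm]
    · rw [mkE_val, Finset.pair_comm]
  linarith

/-- A chamber function has no 4-cycle. -/
lemma no_four_cycle {c : Fin 4 → Fin 4} (hc : c ∈ chamberFns) (v : Fin 4)
    (h2 : c (c v) ≠ v) : c (c (c (c v))) ≠ v := by
  intro h4
  obtain ⟨h1, M, _, hM⟩ := hc
  have d12 : v ≠ c v := (h1 v).symm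
  have d23 : c v ≠ c (c v) := (h1 (c v)).symm
  have d34 : c (c v) ≠ c (c (c v)) := (h1 (c (c v))).symm
  have d13 : v ≠ c (c v) := fun h => h2 h.symm
  have d24 : c v ≠ c (c (c v)) := fun h => h2 (by rw [congrArg c h, h4])
  have d14 : v ≠ c (c (c v)) := fun h => h1 v (by rw [congrArg c h, h4])
  have i1 : M (mkE v (c v) d12) < M (mkE v (c (c (c v))) d14) :=
    hM v (c (c (c v))) (fun h => d14 h.symm) (fun h => d24 h.symm) _ _ rfl rfl
  have i2 : M (mkE (c v) (c (c v)) d23) < M (mkE v (c v) d12) := by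
    refine hM (c v) v d12 (fun h => d13 h) _ _ rfl ?_
    rw [mkE_val, Finset.pair_comm]
  have i3 : M (mkE (c (c v)) (c (c (c v))) d34) < M (mkE (c v) (c (c v)) d23) := by
    refine hM (c (c v)) (c v) d23 (fun h => d24 h) _ _ rfl ?_
    rw [mkE_val, Finset.pair_comm]
  have i4 : M (mkE v (c (c (c v))) d14) < M (mkE (c (c v)) (c (c (c v))) d34) := by
    refine hM (c (c (c v))) (c (c v)) d34 (fun h => d13 (by rw [h, h4])) _ _ ?_ ?_
    · rw [mkE_val, h4, Finset.pair_comm]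
    · rw [mkE_val, Finset.pair_comm]
  linarith

/-- Building a chamber function from a natural-number valued weight on pairs. -/
lemma mem_chamberFns_of_weight (c : Fin 4 → Fin 4) (w : Finset (Fin 4) → ℕ)
    (h1 : ∀ v, c v ≠ v) (hpos : ∀ s : Finset (Fin 4), 0 < w s)
    (hlt : ∀ v u : Fin 4, u ≠ v → u ≠ c v → w {v, c v} < w {v, u}) :
    c ∈ chamberFns := by
  refine ⟨h1, fun e => (w e.val : ℝ), fun e => ?_, ?_⟩
  · show (0 : ℝ) < (w e.val : ℝ)
    exact_mod_cast hpos e.val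
  · intro v u hu huc e e' he he'
    show (w e.val : ℝ) < (w e'.val : ℝ)
    rw [he, he']
    exact_mod_cast hlt v u hu huc

/-! The four orbit representatives and their orbits as explicit finsets. -/

def cc1 : Fin 4 → Fin 4 := ![1,0,3,2]
def cc2 : Fin 4 → Fin 4 := ![1,0,0,0]
def cc3 : Fin 4 → Fin 4 := ![1,0,0,1]
def cc4 : Fin 4 → Fin 4 := ![1,0,3,0]

def FF1 : Finset (Fin 4 → Fin 4) := {![1,0,3,2], ![2,3,0,1], ![3,2,1,0]}
def FF2 : Finset (Fin 4 → Fin 4) :=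
  {![1,0,0,0], ![1,0,1,1], ![1,2,1,1], ![1,3,1,1], ![2,0,0,0], ![2,2,0,2],
   ![2,2,1,2], ![2,2,3,2], ![3,0,0,0], ![3,3,3,0], ![3,3,3,1], ![3,3,3,2]}
def FF3 : Finset (Fin 4 → Fin 4) :=
  {![1,0,0,1], ![1,0,1,0], ![1,2,1,2], ![1,3,3,1], ![2,0,0,2], ![2,2,0,0],
   ![2,2,1,1], ![2,3,3,2], ![3,0,3,0], ![3,2,3,2], ![3,3,0,0], ![3,3,1,1]}
def FF4 : Finset (Fin 4 → Fin 4) :=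
  {![1,0,0,2], ![1,0,1,2], ![1,0,3,0], ![1,0,3,1], ![1,2,1,0], ![1,2,3,2],
   ![1,3,0,1], ![1,3,3,2], ![2,0,0,1], ![2,0,3,2], ![2,2,0,1], ![2,2,1,0],
   ![2,3,0,0], ![2,3,0,2], ![2,3,1,1], ![2,3,3,1], ![3,0,1,0], ![3,0,3,2],
   ![3,2,0,0], ![3,2,1,1], ![3,2,1,2], ![3,2,3,0], ![3,3,0,1], ![3,3,1,0]}

lemma orbsub1 : ∀ x ∈ FF1, ∃ σ : Equiv.Perm (Fin 4), x = σ ∘ cc1 ∘ σ.symm := by decide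
lemma orbsub2 : ∀ x ∈ FF2, ∃ σ : Equiv.Perm (Fin 4), x = σ ∘ cc2 ∘ σ.symm := by decide
lemma orbsub3 : ∀ x ∈ FF3, ∃ σ : Equiv.Perm (Fin 4), x = σ ∘ cc3 ∘ σ.symm := by decide
lemma orbsub4 : ∀ x ∈ FF4, ∃ σ : Equiv.Perm (Fin 4), x = σ ∘ cc4 ∘ σ.symm := by decide

lemma orbsup1 : ∀ σ : Equiv.Perm (Fin 4), (σ ∘ cc1 ∘ σ.symm) ∈ FF1 := by decide
lemma orbsup2 : ∀ σ : Equiv.Perm (Fin 4), (σ ∘ cc2 ∘ σ.symm) ∈ FF2 := by decide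
lemma orbsup3 : ∀ σ : Equiv.Perm (Fin 4), (σ ∘ cc3 ∘ σ.symm) ∈ FF3 := by decide
lemma orbsup4 : ∀ σ : Equiv.Perm (Fin 4), (σ ∘ cc4 ∘ σ.symm) ∈ FF4 := by decide

lemma orbit_eq1 : conjOrbit cc1 = ↑FF1 :=
  Set.ext fun x => ⟨fun ⟨σ, h⟩ => h ▸ orbsup1 σ, fun h => orbsub1 x h⟩
lemma orbit_eq2 : conjOrbit cc2 = ↑FF2 :=
  Set.ext fun x => ⟨fun ⟨σ, h⟩ => h ▸ orbsup2 σ, fun h => orbsub2 x h⟩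
lemma orbit_eq3 : conjOrbit cc3 = ↑FF3 :=
  Set.ext fun x => ⟨fun ⟨σ, h⟩ => h ▸ orbsup3 σ, fun h => orbsub3 x h⟩
lemma orbit_eq4 : conjOrbit cc4 = ↑FF4 :=
  Set.ext fun x => ⟨fun ⟨σ, h⟩ => h ▸ orbsup4 σ, fun h => orbsub4 x h⟩

/-- Any fixed-point-free function on `Fin 4` without 3- or 4-cycles is in one of the
four explicit orbits. -/
lemma key_classification : ∀ c : Fin 4 → Fin 4, (∀ v, c v ≠ v) →
    (∀ v, c (c v) ≠ v → c (c (c v)) ≠ v) →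
    (∀ v, c (c v) ≠ v → c (c (c (c v))) ≠ v) →
    c ∈ FF1 ∪ FF2 ∪ FF3 ∪ FF4 := by decide

/-! Weights witnessing feasibility of the four representatives. -/

def ww1 : Finset (Fin 4) → ℕ := fun s =>
  if s = {0,1} then 1 else if s = {2,3} then 1 else 2
def ww2 : Finset (Fin 4) → ℕ := fun s =>
  if s = {0,1} then 1 else if s = {0,2} then 2 else if s = {0,3} then 2 else 3
def ww3 : Finset (Fin 4) → ℕ := fun s =>
  if s = {0,1} then 1 else if s = {0,2} then 2 else if s = {1,3} then 2 else 3
def ww4 : Finset (Fin 4) → ℕ := fun s =>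
  if s = {0,1} then 1 else if s = {0,3} then 2 else if s = {2,3} then 3 else 4

lemma mem1 : cc1 ∈ chamberFns :=
  mem_chamberFns_of_weight cc1 ww1 (by decide) (by decide) (by decide)
lemma mem2 : cc2 ∈ chamberFns :=
  mem_chamberFns_of_weight cc2 ww2 (by decide) (by decide) (by decide)
lemma mem3 : cc3 ∈ chamberFns :=
  mem_chamberFns_of_weight cc3 ww3 (by decide) (by decide) (by decide)
lemma mem4 : cc4 ∈ chamberFns :=
  mem_chamberFns_of_weight cc4 ww4 (by decide) (by decide) (by decide)

/-- The symmetric group `S4` acts on the set of `51` chamber functions by conjugation,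
and this action has exactly `4` orbits, of cardinalities `3`, `12`, `12` and `24`. -/
theorem chamber_orbits :
    (∀ c ∈ chamberFns, ∀ σ : Equiv.Perm (Fin 4), (σ ∘ c ∘ σ.symm) ∈ chamberFns) ∧
    ∃ c₁ c₂ c₃ c₄ : Fin 4 → Fin 4,
      c₁ ∈ chamberFns ∧ c₂ ∈ chamberFns ∧ c₃ ∈ chamberFns ∧ c₄ ∈ chamberFns ∧
      chamberFns = conjOrbit c₁ ∪ conjOrbit c₂ ∪ conjOrbit c₃ ∪ conjOrbit c₄ ∧
      Disjoint (conjOrbit c₁) (conjOrbit c₂) ∧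
      Disjoint (conjOrbit c₁) (conjOrbit c₃) ∧
      Disjoint (conjOrbit c₁) (conjOrbit c₄) ∧
      Disjoint (conjOrbit c₂) (conjOrbit c₃) ∧
      Disjoint (conjOrbit c₂) (conjOrbit c₄) ∧
      Disjoint (conjOrbit c₃) (conjOrbit c₄) ∧
      Nat.card (conjOrbit c₁) = 3 ∧ Nat.card (conjOrbit c₂) = 12 ∧
      Nat.card (conjOrbit c₃) = 12 ∧ Nat.card (conjOrbit c₄) = 24 := by
  refine ⟨fun c hc σ => conj_mem_chamberFns hc σ, cc1, cc2, cc3, cc4,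
    mem1, mem2, mem3, mem4, ?_, ?_, ?_, ?_, ?_, ?_, ?_, ?_, ?_, ?_, ?_⟩
  · apply Set.eq_of_subset_of_subset
    · intro c hc
      have h1 := hc.1
      have h3 := fun v hv => no_three_cycle hc v hv
      have h4 := fun v hv => no_four_cycle hc v hv
      have := key_classification c h1 h3 h4
      rw [Finset.mem_union, Finset.mem_union, Finset.mem_union] at this
      rcases this with ((h | h) | h) | h
      · exact Or.inl (Or.inl (Or.inl (orbit_eq1 ▸ (by exact h))))
      · exact Or.inl (Or.inl (Or.inr (orbit_eq2 ▸ (by exact h))))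
      · exact Or.inl (Or.inr (orbit_eq3 ▸ (by exact h)))
      · exact Or.inr (orbit_eq4 ▸ (by exact h))
    · intro c hc
      rcases hc with ((⟨σ, h⟩ | ⟨σ, h⟩) | ⟨σ, h⟩) | ⟨σ, h⟩
      · exact h ▸ conj_mem_chamberFns mem1 σ
      · exact h ▸ conj_mem_chamberFns mem2 σ
      · exact h ▸ conj_mem_chamberFns mem3 σ
      · exact h ▸ conj_mem_chamberFns mem4 σ
  all_goals first
    | (rw [orbit_eq1, orbit_eq2]; exact Finset.disjoint_coe.2 (by decide))
    | (rw [orbit_eq1, orbit_eq3]; exact Finset.disjoint_coe.2 (by decide))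
    | (rw [orbit_eq1, orbit_eq4]; exact Finset.disjoint_coe.2 (by decide))
    | (rw [orbit_eq2, orbit_eq3]; exact Finset.disjoint_coe.2 (by decide))
    | (rw [orbit_eq2, orbit_eq4]; exact Finset.disjoint_coe.2 (by decide))
    | (rw [orbit_eq3, orbit_eq4]; exact Finset.disjoint_coe.2 (by decide))
    | (rw [orbit_eq1, Nat.card_coe_set_eq, Set.ncard_coe_finset]; decide)
    | (rw [orbit_eq2, Nat.card_coe_set_eq, Set.ncard_coe_finset]; decide)
    | (rw [orbit_eq3, Nat.card_coe_set_eq, Set.ncard_coe_finset]; decide)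
    | (rw [orbit_eq4, Nat.card_coe_set_eq, Set.ncard_coe_finset]; decide)
end
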